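/- For divisors D and E on a finite graph, the Baker-Norine rank is superadditive with respect to non-negative ranks: if r_G(D) ≥ 0 and r_G(E) ≥ 0, then r_G(D + E) ≥ r_G(D) + r_G(E). -/
import Mathlib


open Finset

/-- Finite multigraph model: symmetric `m : V → V → ℕ`, `m v w` = number of edges
between `v ≠ w`, `m v v` = number of loops at `v`; the valence counts loops twice. -/
def valence {V : Type*} [Fintype V] (m : V → V → ℕ) (v : V) : ℤ :=
  (∑ u, (m v u : ℤ)) + m v v

/-- The chip-firing divisor `Δ_v` of the vertex `v`. -/
def chipDiv {V : Type*} [Fintype V] [DecidableEq V] (m : V → V → ℕ) (v : V) : V → ℤ :=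
  fun w => if w = v then -(valence m v) + 2 * m v v else m v w

/-- The subgroup of `Div(G) = V → ℤ` generated by the chip-firing divisors;
`D ∼ D'` iff `D - D' ∈ chipGroup m`. -/
def chipGroup {V : Type*} [Fintype V] [DecidableEq V] (m : V → V → ℕ) :
    AddSubgroup (V → ℤ) :=
  AddSubgroup.closure (Set.range (chipDiv m))

/-- A divisor is effective if all its coefficients are non-negative. -/
def Effective {V : Type*} (D : V → ℤ) : Prop := ∀ v, 0 ≤ D v

/-- Connectedness of the multigraph `m`: the simple graph with an edge between the
distinct vertices `v, w` whenever `m v w ≠ 0` is connected. -/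
def IsConn {V : Type*} (m : V → V → ℕ) : Prop :=
  (SimpleGraph.fromRel fun v w => m v w ≠ 0).Connected

/-- The Baker–Norine rank of a divisor `D`: the greatest integer `r ≥ 0` such that for
every effective divisor `D'` of degree `r` the linear system `|D - D'|` is nonempty
(i.e. some effective divisor is chip-firing equivalent to `D - D'`), and `-1` if there
is no such `r`. -/
noncomputable def bnRank {V : Type*} [Fintype V] [DecidableEq V] (m : V → V → ℕ)
    (D : V → ℤ) : ℤ :=
  sSup (insert (-1) {r : ℤ | 0 ≤ r ∧ ∀ D' : V → ℤ, Effective D' → (∑ v, D' v) = r →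
      ∃ F : V → ℤ, Effective F ∧ D - D' - F ∈ chipGroup m})

/-- The degree homomorphism. -/
def degHom (V : Type*) [Fintype V] : (V → ℤ) →+ ℤ where
  toFun x := ∑ v, x v
  map_zero' := by simp
  map_add' x y := by simp [Finset.sum_add_distrib]

theorem deg_eq_zero_of_mem_chipGroup {V : Type*} [Fintype V] [DecidableEq V]
    (m : V → V → ℕ) {x : V → ℤ} (hx : x ∈ chipGroup m) : ∑ v, x v = 0 := by
  have h : chipGroup m ≤ (degHom V).ker := by
    rw [chipGroup, AddSubgroup.closure_le]
    rintro _ ⟨v, rfl⟩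
    have key : ∀ w, chipDiv m v w
        = (m v w : ℤ) + (if w = v then -(valence m v) + m v v else 0) := by
      intro w
      by_cases h : w = v
      · subst h; simp [chipDiv]; ring
      · simp [chipDiv, h]
    simp only [SetLike.mem_coe, AddMonoidHom.mem_ker, degHom, AddMonoidHom.coe_mk,
      ZeroHom.coe_mk]
    rw [Finset.sum_congr rfl (fun w _ => key w), Finset.sum_add_distrib,
      Finset.sum_ite_eq' Finset.univ v (fun _ => -(valence m v) + (m v v : ℤ))]
    simp [valence]
  have := h hx
  simpa [AddMonoidHom.mem_ker, degHom] using this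

/-- Splitting an effective divisor. -/
theorem exists_split {V : Type*} [Fintype V] [DecidableEq V] [Nonempty V] :
    ∀ (n : ℕ) (D' : V → ℤ), Effective D' → (n : ℤ) ≤ ∑ v, D' v →
      ∃ A : V → ℤ, Effective A ∧ Effective (D' - A) ∧ ∑ v, A v = n := by
  intro n
  induction n with
  | zero =>
    intro D' hD' _
    exact ⟨0, fun v => le_rfl, by simpa [Effective] using hD', by simp⟩
  | succ n ih =>
    intro D' hD' hdeg
    have hpos : (0 : ℤ) < ∑ v, D' v := lt_of_lt_of_le (by positivity) hdeg
    have : ∃ v, (0 : ℤ) < D' v := by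
      by_contra hc
      push_neg at hc
      have : ∑ v, D' v ≤ 0 := Finset.sum_nonpos (fun v _ => hc v)
      omega
    obtain ⟨v, hv⟩ := this
    set D'' : V → ℤ := D' - Pi.single v 1 with hD''
    have hDeff : Effective D'' := by
      intro w
      by_cases h : w = v
      · subst h; simp [hD'']; omega
      · simpa [hD'', Pi.single_apply, h] using hD' w
    have hsum : ∑ w, D'' w = (∑ w, D' w) - 1 := by
      simp [hD'', Finset.sum_sub_distrib, Pi.single_apply]
    obtain ⟨A, hA, hA2, hA3⟩ := ih D'' hDeff (by omega)
    refine ⟨A + Pi.single v 1, fun w => ?_, fun w => ?_, ?_⟩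
    · have := hA w
      by_cases h : w = v
      · subst h; simp only [Pi.add_apply, Pi.single_apply, if_pos rfl]; omega
      · simpa [Pi.single_apply, h] using this
    · have := hA2 w
      simp only [hD'', Pi.sub_apply, Pi.add_apply] at this ⊢
      omega
    · push_cast
      simp [Finset.sum_add_distrib, hA3, Pi.single_apply]

theorem bnRank_bddAbove {V : Type*} [Fintype V] [DecidableEq V] [Nonempty V]
    (m : V → V → ℕ) (D : V → ℤ) :
    BddAbove (insert (-1) {r : ℤ | 0 ≤ r ∧ ∀ D' : V → ℤ, Effective D' → (∑ v, D' v) = r →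
      ∃ F : V → ℤ, Effective F ∧ D - D' - F ∈ chipGroup m}) := by
  refine ⟨max (∑ v, D v) 0, ?_⟩
  rintro r (rfl | ⟨hr0, hr⟩)
  · simp
  obtain ⟨v₀⟩ := ‹Nonempty V›
  set D' : V → ℤ := Pi.single v₀ r with hD'
  have heff : Effective D' := by
    intro w
    by_cases h : w = v₀ <;> simp [hD', Pi.single_apply, h, hr0]
  have hdeg : ∑ v, D' v = r := by simp [hD', Pi.single_apply]
  obtain ⟨F, hF, hmem⟩ := hr D' heff hdeg
  have h0 := deg_eq_zero_of_mem_chipGroup m hmem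
  have hFs : 0 ≤ ∑ v, F v := Finset.sum_nonneg (fun v _ => hF v)
  have : ∑ v, (D - D' - F) v = ∑ v, D v - r - ∑ v, F v := by
    simp [Finset.sum_sub_distrib, hdeg]
  rw [this] at h0
  simp only [le_max_iff]
  left; omega

theorem bnRank_mem {V : Type*} [Fintype V] [DecidableEq V] [Nonempty V]
    (m : V → V → ℕ) (D : V → ℤ) (hD : 0 ≤ bnRank m D) :
    0 ≤ bnRank m D ∧ ∀ D' : V → ℤ, Effective D' → (∑ v, D' v) = bnRank m D →
      ∃ F : V → ℤ, Effective F ∧ D - D' - F ∈ chipGroup m := by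
  have hmem := Int.csSup_mem (s := insert (-1) {r : ℤ | 0 ≤ r ∧
      ∀ D' : V → ℤ, Effective D' → (∑ v, D' v) = r →
      ∃ F : V → ℤ, Effective F ∧ D - D' - F ∈ chipGroup m})
    ⟨-1, Set.mem_insert _ _⟩ (bnRank_bddAbove m D)
  rw [show sSup _ = bnRank m D from rfl] at hmem
  rcases hmem with h | h
  · omega
  · exact ⟨hD, h.2⟩

/-- The Baker–Norine rank is superadditive with respect to non-negative ranks:
if `r_G(D) ≥ 0` and `r_G(E) ≥ 0`, then `r_G(D + E) ≥ r_G(D) + r_G(E)`. -/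
theorem bnRank_superadditive {V : Type*} [Fintype V] [DecidableEq V] (m : V → V → ℕ)
    (hm : ∀ v w, m v w = m w v) (hconn : IsConn m)
    (D E : V → ℤ) (hD : 0 ≤ bnRank m D) (hE : 0 ≤ bnRank m E) :
    bnRank m D + bnRank m E ≤ bnRank m (D + E) := by
  have hne : Nonempty V := hconn.nonempty
  obtain ⟨hD0, hDprop⟩ := bnRank_mem m D hD
  obtain ⟨hE0, hEprop⟩ := bnRank_mem m E hE
  set a := bnRank m D
  set b := bnRank m E
  have hmem : a + b ∈ insert (-1) {r : ℤ | 0 ≤ r ∧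
      ∀ D' : V → ℤ, Effective D' → (∑ v, D' v) = r →
      ∃ F : V → ℤ, Effective F ∧ (D + E) - D' - F ∈ chipGroup m} := by
    refine Set.mem_insert_of_mem _ ⟨by omega, ?_⟩
    intro D' hD' hdeg
    obtain ⟨A, hA, hA2, hA3⟩ := exists_split a.toNat D' hD'
      (by rw [hdeg]; omega)
    have hA3' : ∑ v, A v = a := by rw [hA3]; omega
    have hB3 : ∑ v, (D' - A) v = b := by
      simp [Finset.sum_sub_distrib, hA3', hdeg]
    obtain ⟨F₁, hF₁, hF₁mem⟩ := hDprop A hA hA3'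
    obtain ⟨F₂, hF₂, hF₂mem⟩ := hEprop (D' - A) hA2 hB3
    refine ⟨F₁ + F₂, fun v => by have h1 := hF₁ v; have h2 := hF₂ v; simp only [Pi.add_apply]; omega, ?_⟩
    have := AddSubgroup.add_mem _ hF₁mem hF₂mem
    have heq : (D - A - F₁) + (E - (D' - A) - F₂) = (D + E) - D' - (F₁ + F₂) := by
      ring
    rwa [heq] at this
  exact le_csSup (bnRank_bddAbove m (D + E)) hmem
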